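/- Let A = [a_{ij}] be a symmetric (0,1) matrix of size 2n×2n with zero diagonal, and let r_i denote the i-th row sum of A. Then for each index i, (hafn A)^{hafn A} ≤ r_i^{hafn A} · Π_{j : a_{ij}=1} (hafn A(i,j))^{hafn A(i,j)}, with the convention 0^0 = 1. -/

import Mathlib

/-- The hafnian of an `m × m` real matrix (intended for even `m`):
`hafn A = (1/((m/2)! 2^(m/2))) ∑_σ ∏_k A (σ(2k)) (σ(2k+1))`,
which for symmetric `A` of even order equals the sum over all perfect
matchings of `K_m` of the products of the corresponding entries. -/
noncomputable def hafn {m : ℕ} (A : Matrix (Fin m) (Fin m) ℝ) : ℝ :=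
  (∑ σ : Equiv.Perm (Fin m), ∏ k : Fin (m / 2),
      A (σ ⟨2 * k.1, by omega⟩) (σ ⟨2 * k.1 + 1, by have := k.2; omega⟩)) /
    ((m / 2).factorial * 2 ^ (m / 2))

/-- The matrix obtained from `A` by deleting the rows and columns `i` and `j`. -/
noncomputable def delTwo {m : ℕ} (A : Matrix (Fin m) (Fin m) ℝ) (i j : Fin m)
    (h : i ≠ j) : Matrix (Fin (m - 2)) (Fin (m - 2)) ℝ :=
  A.submatrix (({i, j}ᶜ : Finset (Fin m)).orderEmbOfFin
      (by
        rw [Finset.card_compl, Finset.card_insert_of_notMem (by simpa using h),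
          Finset.card_singleton, Fintype.card_fin]))
    (({i, j}ᶜ : Finset (Fin m)).orderEmbOfFin
      (by
        rw [Finset.card_compl, Finset.card_insert_of_notMem (by simpa using h),
          Finset.card_singleton, Fintype.card_fin]))


open Finset Equiv

noncomputable def sHaf {m : ℕ} (A : Matrix (Fin m) (Fin m) ℝ) : ℝ :=
  ∑ σ : Equiv.Perm (Fin m), ∏ k : Fin (m / 2),
      A (σ ⟨2 * k.1, by omega⟩) (σ ⟨2 * k.1 + 1, by have := k.2; omega⟩)

noncomputable def pprodn (n : ℕ) (A : Matrix (Fin (2 * n)) (Fin (2 * n)) ℝ)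
    (σ : Equiv.Perm (Fin (2 * n))) : ℝ :=
  ∏ k : Fin n, A (σ ⟨2 * k.1, by omega⟩) (σ ⟨2 * k.1 + 1, by have := k.2; omega⟩)

noncomputable def del2 {m : ℕ} (A : Matrix (Fin m) (Fin m) ℝ) (i j : Fin m) :
    Matrix (Fin (m - 2)) (Fin (m - 2)) ℝ :=
  if h : i ≠ j then delTwo A i j h else 0

lemma amgm_aux {ι : Type*} (s : Finset ι) (t : ι → ℝ) (ht : ∀ j ∈ s, 0 ≤ t j) :
    (∑ j ∈ s, t j) ^ (∑ j ∈ s, t j) ≤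
      (s.card : ℝ) ^ (∑ j ∈ s, t j) * ∏ j ∈ s, t j ^ t j := by
  obtain ⟨T, hT⟩ : ∃ T : ℝ, T = ∑ j ∈ s, t j := ⟨_, rfl⟩
  rw [← hT]
  rcases eq_or_lt_of_le (Finset.sum_nonneg ht) with h0 | hpos'

  · -- T = 0, all t j = 0
    have hall : ∀ j ∈ s, t j = 0 :=
      (Finset.sum_eq_zero_iff_of_nonneg ht).mp h0.symm
    have hT0 : T = 0 := hT.trans h0.symm
    rw [hT0, Real.rpow_zero, Real.rpow_zero, one_mul]
    have : ∏ j ∈ s, t j ^ t j = 1 :=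
      Finset.prod_eq_one fun j hj => by rw [hall j hj, Real.rpow_zero]
    rw [this]
  · -- T > 0
    have hpos : 0 < T := by rw [hT]; exact hpos'
    have hs : s.Nonempty := by
      rcases Finset.eq_empty_or_nonempty s with h | h
      · exfalso; rw [h] at hT; simp at hT; rw [hT] at hpos; exact lt_irrefl 0 hpos
      · exact h
    have hc : (0 : ℝ) < s.card := by
      exact_mod_cast Finset.card_pos.mpr hs
    -- Jensen: (T/c) log (T/c) ≤ (1/c) Σ t log t
    have hjen : (T / s.card) * Real.log (T / s.card) ≤
        ∑ j ∈ s, (s.card : ℝ)⁻¹ * (t j * Real.log (t j)) := by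
      have h2 := Real.convexOn_mul_log.map_sum_le (t := s)
        (w := fun _ => (s.card : ℝ)⁻¹) (p := t)
        (fun j _ => by positivity)
        (by rw [Finset.sum_const, nsmul_eq_mul, mul_inv_cancel₀ hc.ne'])
        (fun j hj => ht j hj)
      simp only [smul_eq_mul] at h2
      rw [← Finset.mul_sum, ← hT] at h2
      rw [div_eq_mul_inv, mul_comm T]
      exact h2
    -- multiply by card
    have hkey : T * Real.log T ≤ T * Real.log s.card + ∑ j ∈ s, t j * Real.log (t j) := by
      have h3 : (s.card : ℝ) * ((T / s.card) * Real.log (T / s.card)) ≤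
          (s.card : ℝ) * ∑ j ∈ s, (s.card : ℝ)⁻¹ * (t j * Real.log (t j)) :=
        mul_le_mul_of_nonneg_left hjen hc.le
      rw [Real.log_div hpos.ne' hc.ne'] at h3
      have e1 : (s.card : ℝ) * (T / s.card * (Real.log T - Real.log s.card))
          = T * Real.log T - T * Real.log s.card := by
        field_simp
      have e2 : (s.card:ℝ) * ∑ i ∈ s, (s.card : ℝ)⁻¹ * (t i * Real.log (t i))
          = ∑ j ∈ s, t j * Real.log (t j) := by
        rw [← Finset.mul_sum, ← mul_assoc, mul_inv_cancel₀ hc.ne', one_mul]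
      rw [e1, e2] at h3
      linarith
    -- exponentiate
    have hL : T ^ T = Real.exp (T * Real.log T) := by
      rw [Real.rpow_def_of_pos hpos, mul_comm]
    have hprod : ∏ j ∈ s, t j ^ t j = Real.exp (∑ j ∈ s, t j * Real.log (t j)) := by
      rw [Real.exp_sum]
      apply Finset.prod_congr rfl
      intro j hj
      rcases eq_or_lt_of_le (ht j hj) with h | h
      · rw [← h]; simp
      · rw [Real.rpow_def_of_pos h, mul_comm]
    have hR : (s.card : ℝ) ^ T = Real.exp (T * Real.log s.card) := by
      rw [Real.rpow_def_of_pos hc, mul_comm]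
    rw [hL, hprod, hR, ← Real.exp_add]
    exact Real.exp_le_exp.mpr hkey



lemma sHaf_eq_pprodn (n : ℕ) (A : Matrix (Fin (2 * n)) (Fin (2 * n)) ℝ) :
    sHaf A = ∑ σ : Equiv.Perm (Fin (2 * n)), pprodn n A σ := by
  unfold sHaf pprodn
  apply Finset.sum_congr rfl
  intro σ _
  exact Fintype.prod_equiv (finCongr (by omega : 2 * n / 2 = n)) _ _
    (fun k => by simp [finCongr])

lemma sHaf_nonneg {m : ℕ} (A : Matrix (Fin m) (Fin m) ℝ) (h : ∀ i j, 0 ≤ A i j) :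
    0 ≤ sHaf A :=
  Finset.sum_nonneg fun σ _ => Finset.prod_nonneg fun k _ => h _ _

lemma sHaf_submatrix_perm {m : ℕ} (A : Matrix (Fin m) (Fin m) ℝ) (π : Equiv.Perm (Fin m)) :
    sHaf (A.submatrix π π) = sHaf A := by
  unfold sHaf
  exact Fintype.sum_equiv (Equiv.mulLeft π) _ _ (fun σ => rfl)

lemma sHaf_eq_of_image_eq {a b M : ℕ} (B : Matrix (Fin M) (Fin M) ℝ)
    (f : Fin a → Fin M) (g : Fin b → Fin M)
    (hf : Function.Injective f) (hg : Function.Injective g)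
    (him : Finset.image f Finset.univ = Finset.image g Finset.univ) :
    sHaf (B.submatrix f f) = sHaf (B.submatrix g g) := by
  have hab : a = b := by
    have h1 : (Finset.image f Finset.univ).card = a := by
      rw [Finset.card_image_of_injective _ hf, Finset.card_univ, Fintype.card_fin]
    have h2 : (Finset.image g Finset.univ).card = b := by
      rw [Finset.card_image_of_injective _ hg, Finset.card_univ, Fintype.card_fin]
    rw [him, h2] at h1
    exact h1.symm
  subst hab
  have hrange : Set.range f = Set.range g := by
    have := congrArg (fun s : Finset (Fin M) => (s : Set (Fin M))) him
    simpa [Finset.coe_image, Set.image_univ] using this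
  set c : Fin a ≃ Fin a :=
    ((Equiv.ofInjective f hf).trans (Equiv.setCongr hrange)).trans
      (Equiv.ofInjective g hg).symm with hc
  have hgc : ∀ x, g (c x) = f x := by
    intro x
    have : (c x : Fin a) = (Equiv.ofInjective g hg).symm ⟨f x, hrange ▸ Set.mem_range_self x⟩ := rfl
    rw [this]
    exact congrArg Subtype.val
      ((Equiv.ofInjective g hg).apply_symm_apply ⟨f x, hrange ▸ Set.mem_range_self x⟩)
  have : B.submatrix f f = (B.submatrix g g).submatrix c c := by
    ext x y
    simp [Matrix.submatrix_apply, hgc]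
  rw [this, sHaf_submatrix_perm]

-- within-pair swap invariance
lemma pprodn_mul_swap (n : ℕ) (A : Matrix (Fin (2 * n)) (Fin (2 * n)) ℝ)
    (hA : A.IsSymm) (σ : Equiv.Perm (Fin (2 * n))) (k : Fin n) :
    pprodn n A (σ * Equiv.swap (⟨2 * k.1, by omega⟩ : Fin (2 * n)) ⟨2 * k.1 + 1, by omega⟩)
      = pprodn n A σ := by
  unfold pprodn
  apply Finset.prod_congr rfl
  intro k' _
  simp only [Equiv.Perm.mul_apply]
  rcases eq_or_ne k' k with rfl | hne
  · rw [Equiv.swap_apply_left, Equiv.swap_apply_right]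
    exact hA.apply _ _
  · have h1 : (⟨2 * k'.1, by omega⟩ : Fin (2 * n)) ≠ ⟨2 * k.1, by omega⟩ := by
      simp only [ne_eq, Fin.mk.injEq]
      omega
    have h2 : (⟨2 * k'.1, by omega⟩ : Fin (2 * n)) ≠ ⟨2 * k.1 + 1, by omega⟩ := by
      simp only [ne_eq, Fin.mk.injEq]
      omega
    have h3 : (⟨2 * k'.1 + 1, by omega⟩ : Fin (2 * n)) ≠ ⟨2 * k.1, by omega⟩ := by
      simp only [ne_eq, Fin.mk.injEq]
      omega
    have h4 : (⟨2 * k'.1 + 1, by omega⟩ : Fin (2 * n)) ≠ ⟨2 * k.1 + 1, by omega⟩ := by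
      simp only [ne_eq, Fin.mk.injEq]
      have := k'.2; have := k.2
      omega
    rw [Equiv.swap_apply_of_ne_of_ne h1 h2, Equiv.swap_apply_of_ne_of_ne h3 h4]

-- pair-swap invariance
lemma pprodn_mul_pairSwap (n : ℕ) (A : Matrix (Fin (2 * n)) (Fin (2 * n)) ℝ)
    (σ : Equiv.Perm (Fin (2 * n))) (k l : Fin n) :
    pprodn n A (σ * (Equiv.swap (⟨2 * k.1, by omega⟩ : Fin (2 * n)) ⟨2 * l.1, by omega⟩
        * Equiv.swap (⟨2 * k.1 + 1, by omega⟩ : Fin (2 * n)) ⟨2 * l.1 + 1, by omega⟩))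
      = pprodn n A σ := by
  have hne : ∀ (a b : ℕ) (ha : a < 2 * n) (hb : b < 2 * n), a ≠ b →
      (⟨a, ha⟩ : Fin (2 * n)) ≠ ⟨b, hb⟩ := by
    intro a b ha hb h
    simp only [ne_eq, Fin.mk.injEq]
    exact h
  set s1 := Equiv.swap (⟨2 * k.1, by omega⟩ : Fin (2 * n)) ⟨2 * l.1, by omega⟩ with hs1
  set s2 := Equiv.swap (⟨2 * k.1 + 1, by omega⟩ : Fin (2 * n)) ⟨2 * l.1 + 1, by omega⟩ with hs2
  unfold pprodn
  rw [← Equiv.prod_comp (Equiv.swap k l)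
      (fun k' : Fin n => A (σ ⟨2 * k'.1, by omega⟩) (σ ⟨2 * k'.1 + 1, by omega⟩))]
  apply Finset.prod_congr rfl
  intro k' _
  simp only [Equiv.Perm.mul_apply]
  have hk2 := k.2; have hl2 := l.2; have hk'2 := k'.2
  rcases eq_or_ne k' k with rfl | hk
  · have hswap : (Equiv.swap k' l) k' = l := Equiv.swap_apply_left _ _
    rw [hswap]
    have e1 : s2 (⟨2 * k'.1, by omega⟩ : Fin (2 * n)) = ⟨2 * k'.1, by omega⟩ :=
      Equiv.swap_apply_of_ne_of_ne (hne _ _ _ _ (by omega)) (hne _ _ _ _ (by omega))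
    have e2 : s1 (⟨2 * k'.1, by omega⟩ : Fin (2 * n)) = ⟨2 * l.1, by omega⟩ :=
      Equiv.swap_apply_left _ _
    have e3 : s2 (⟨2 * k'.1 + 1, by omega⟩ : Fin (2 * n)) = ⟨2 * l.1 + 1, by omega⟩ :=
      Equiv.swap_apply_left _ _
    have e4 : s1 (⟨2 * l.1 + 1, by omega⟩ : Fin (2 * n)) = ⟨2 * l.1 + 1, by omega⟩ :=
      Equiv.swap_apply_of_ne_of_ne (hne _ _ _ _ (by omega)) (hne _ _ _ _ (by omega))
    rw [e1, e2, e3, e4]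
  rcases eq_or_ne k' l with rfl | hl
  · have hswap : (Equiv.swap k k') k' = k := Equiv.swap_apply_right _ _
    rw [hswap]
    have e1 : s2 (⟨2 * k'.1, by omega⟩ : Fin (2 * n)) = ⟨2 * k'.1, by omega⟩ :=
      Equiv.swap_apply_of_ne_of_ne (hne _ _ _ _ (by omega)) (hne _ _ _ _ (by omega))
    have e2 : s1 (⟨2 * k'.1, by omega⟩ : Fin (2 * n)) = ⟨2 * k.1, by omega⟩ :=
      Equiv.swap_apply_right _ _
    have e3 : s2 (⟨2 * k'.1 + 1, by omega⟩ : Fin (2 * n)) = ⟨2 * k.1 + 1, by omega⟩ :=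
      Equiv.swap_apply_right _ _
    have e4 : s1 (⟨2 * k.1 + 1, by omega⟩ : Fin (2 * n)) = ⟨2 * k.1 + 1, by omega⟩ :=
      Equiv.swap_apply_of_ne_of_ne (hne _ _ _ _ (by omega)) (hne _ _ _ _ (by omega))
    rw [e1, e2, e3, e4]
  · rw [Equiv.swap_apply_of_ne_of_ne hk hl]
    have hkk : k'.1 ≠ k.1 := fun h => hk (Fin.ext h)
    have hll : k'.1 ≠ l.1 := fun h => hl (Fin.ext h)
    have e1 : s2 (⟨2 * k'.1, by omega⟩ : Fin (2 * n)) = ⟨2 * k'.1, by omega⟩ :=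
      Equiv.swap_apply_of_ne_of_ne (hne _ _ _ _ (by omega)) (hne _ _ _ _ (by omega))
    have e2 : s1 (⟨2 * k'.1, by omega⟩ : Fin (2 * n)) = ⟨2 * k'.1, by omega⟩ :=
      Equiv.swap_apply_of_ne_of_ne (hne _ _ _ _ (by omega)) (hne _ _ _ _ (by omega))
    have e3 : s2 (⟨2 * k'.1 + 1, by omega⟩ : Fin (2 * n)) = ⟨2 * k'.1 + 1, by omega⟩ :=
      Equiv.swap_apply_of_ne_of_ne (hne _ _ _ _ (by omega)) (hne _ _ _ _ (by omega))
    have e4 : s1 (⟨2 * k'.1 + 1, by omega⟩ : Fin (2 * n)) = ⟨2 * k'.1 + 1, by omega⟩ :=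
      Equiv.swap_apply_of_ne_of_ne (hne _ _ _ _ (by omega)) (hne _ _ _ _ (by omega))
    rw [e1, e2, e3, e4]

lemma fiber_shift (n : ℕ) (A : Matrix (Fin (2 * n)) (Fin (2 * n)) ℝ) (i z p : Fin (2 * n))
    (h : Equiv.Perm (Fin (2 * n)))
    (hinv : ∀ σ, pprodn n A (σ * h) = pprodn n A σ) (hhz : h z = p) :
    ∑ σ ∈ Finset.univ.filter (fun σ : Equiv.Perm (Fin (2 * n)) => σ p = i), pprodn n A σ
      = ∑ σ ∈ Finset.univ.filter (fun σ : Equiv.Perm (Fin (2 * n)) => σ z = i),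
          pprodn n A σ := by
  apply Finset.sum_equiv (Equiv.mulRight h)
  · intro σ
    simp only [Finset.mem_filter, Finset.mem_univ, true_and, Equiv.coe_mulRight,
      Equiv.Perm.mul_apply, hhz]
  · intro σ _
    exact (hinv σ).symm

lemma key_shift (n : ℕ) (hn : 0 < n) (A : Matrix (Fin (2 * n)) (Fin (2 * n)) ℝ)
    (hA : A.IsSymm) (i p : Fin (2 * n)) :
    ∑ σ ∈ Finset.univ.filter (fun σ : Equiv.Perm (Fin (2 * n)) => σ p = i), pprodn n A σ
      = ∑ σ ∈ Finset.univ.filter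
          (fun σ : Equiv.Perm (Fin (2 * n)) => σ ⟨0, by omega⟩ = i), pprodn n A σ := by
  have hp2 := p.2
  -- the two swaps
  let s1 : Equiv.Perm (Fin (2 * n)) :=
    Equiv.swap (⟨0, by omega⟩ : Fin (2 * n)) ⟨2 * (p.1 / 2), by omega⟩
  let s2 : Equiv.Perm (Fin (2 * n)) :=
    Equiv.swap (⟨1, by omega⟩ : Fin (2 * n)) ⟨2 * (p.1 / 2) + 1, by omega⟩
  let sw : Equiv.Perm (Fin (2 * n)) :=
    Equiv.swap (⟨0, by omega⟩ : Fin (2 * n)) ⟨1, by omega⟩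
  rcases Nat.even_or_odd p.1 with hpar | hpar
  · apply fiber_shift n A i _ p (s1 * s2)
    · intro σ
      exact pprodn_mul_pairSwap n A σ ⟨0, hn⟩ ⟨p.1 / 2, by omega⟩
    · show s1 (s2 ⟨0, by omega⟩) = p
      have e1 : s2 (⟨0, by omega⟩ : Fin (2 * n)) = ⟨0, by omega⟩ :=
        Equiv.swap_apply_of_ne_of_ne (by simp [Fin.ext_iff]) (by simp [Fin.ext_iff])
      rw [e1]
      have e2 : s1 (⟨0, by omega⟩ : Fin (2 * n)) = ⟨2 * (p.1 / 2), by omega⟩ :=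
        Equiv.swap_apply_left _ _
      rw [e2]
      apply Fin.ext
      show 2 * (p.1 / 2) = p.1
      rcases hpar with ⟨c, hc⟩
      omega
  · apply fiber_shift n A i _ p ((s1 * s2) * sw)
    · intro σ
      rw [← mul_assoc]
      have h1 : pprodn n A (σ * (s1 * s2) * sw) = pprodn n A (σ * (s1 * s2)) :=
        pprodn_mul_swap n A hA (σ * (s1 * s2)) ⟨0, hn⟩
      rw [h1]
      exact pprodn_mul_pairSwap n A σ ⟨0, hn⟩ ⟨p.1 / 2, by omega⟩
    · show s1 (s2 (sw ⟨0, by omega⟩)) = p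
      have e0 : sw (⟨0, by omega⟩ : Fin (2 * n)) = ⟨1, by omega⟩ :=
        Equiv.swap_apply_left _ _
      rw [e0]
      have e1 : s2 (⟨1, by omega⟩ : Fin (2 * n)) = ⟨2 * (p.1 / 2) + 1, by omega⟩ :=
        Equiv.swap_apply_left _ _
      rw [e1]
      have e2 : s1 (⟨2 * (p.1 / 2) + 1, by omega⟩ : Fin (2 * n))
          = ⟨2 * (p.1 / 2) + 1, by omega⟩ :=
        Equiv.swap_apply_of_ne_of_ne (by simp only [ne_eq, Fin.mk.injEq]; omega)
          (by simp only [ne_eq, Fin.mk.injEq]; omega)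
      rw [e2]
      apply Fin.ext
      show 2 * (p.1 / 2) + 1 = p.1
      rcases hpar with ⟨c, hc⟩
      omega

lemma sum_pprodn_fiber (n : ℕ) (hn : 0 < n) (A : Matrix (Fin (2 * n)) (Fin (2 * n)) ℝ)
    (hA : A.IsSymm) (i : Fin (2 * n)) :
    ∑ σ : Equiv.Perm (Fin (2 * n)), pprodn n A σ
      = (2 * n : ℝ) * ∑ σ ∈ Finset.univ.filter
          (fun σ : Equiv.Perm (Fin (2 * n)) => σ ⟨0, by omega⟩ = i), pprodn n A σ := by
  classical
  calc ∑ σ : Equiv.Perm (Fin (2 * n)), pprodn n A σ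
      = ∑ p : Fin (2 * n), ∑ σ ∈ Finset.univ.filter
          (fun σ : Equiv.Perm (Fin (2 * n)) => σ p = i), pprodn n A σ := by
        rw [← Finset.sum_fiberwise Finset.univ (fun σ : Equiv.Perm (Fin (2 * n)) => σ⁻¹ i)
          (pprodn n A)]
        apply Finset.sum_congr rfl
        intro p _
        apply Finset.sum_congr
        · apply Finset.filter_congr
          intro σ _
          constructor
          · rintro rfl; simp
          · intro hh; rw [← hh]; simp
        · intros; rfl
    _ = ∑ p : Fin (2 * n), ∑ σ ∈ Finset.univ.filter
          (fun σ : Equiv.Perm (Fin (2 * n)) => σ ⟨0, by omega⟩ = i), pprodn n A σ :=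
        Finset.sum_congr rfl (fun p _ => key_shift n hn A hA i p)
    _ = (2 * n : ℝ) * ∑ σ ∈ Finset.univ.filter
          (fun σ : Equiv.Perm (Fin (2 * n)) => σ ⟨0, by omega⟩ = i), pprodn n A σ := by
        rw [Finset.sum_const, Finset.card_univ, Fintype.card_fin, nsmul_eq_mul]
        norm_num

set_option maxHeartbeats 1000000 in
lemma peel (n : ℕ) (A : Matrix (Fin (2 * (n + 1))) (Fin (2 * (n + 1))) ℝ)
    (i : Fin (2 * (n + 1))) :
    ∑ σ ∈ Finset.univ.filter
        (fun σ : Equiv.Perm (Fin (2 * (n + 1))) => σ ⟨0, by omega⟩ = i), pprodn (n + 1) A σ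
      = ∑ w : Fin (2 * n + 1),
          A i (Equiv.swap 0 i w.succ) *
            sHaf (A.submatrix
              (fun x : Fin (2 * n) => Equiv.swap 0 i (Fin.succ (Equiv.swap 0 w x.succ)))
              (fun x : Fin (2 * n) => Equiv.swap 0 i (Fin.succ (Equiv.swap 0 w x.succ)))) := by
  classical
  have hz : (⟨0, by omega⟩ : Fin (2 * (n + 1))) = 0 := by
    apply Fin.ext; simp
  rw [Finset.sum_filter]
  have e1 : (∑ x : Fin (2 * (n + 1)) × Equiv.Perm (Fin (2 * n + 1)),
      (fun σ : Equiv.Perm (Fin (2 * (n + 1))) =>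
        if σ ⟨0, by omega⟩ = i then pprodn (n + 1) A σ else 0)
        (Equiv.Perm.decomposeFin.symm x))
      = ∑ σ : Equiv.Perm (Fin (2 * (n + 1))),
        (fun σ : Equiv.Perm (Fin (2 * (n + 1))) =>
          if σ ⟨0, by omega⟩ = i then pprodn (n + 1) A σ else 0) σ :=
    Fintype.sum_equiv Equiv.Perm.decomposeFin.symm _ _ (fun x => rfl)
  refine Eq.trans e1.symm ?_
  rw [Fintype.sum_prod_type]
  have hz0 : ∀ (p : Fin (2 * (n + 1))) (τ : Equiv.Perm (Fin (2 * n + 1))),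
      (Equiv.Perm.decomposeFin.symm (p, τ)) (⟨0, by omega⟩ : Fin (2 * (n + 1))) = p := by
    intro p τ
    rw [hz]
    exact Equiv.Perm.decomposeFin_symm_apply_zero p τ
  have step1 : ∀ p : Fin (2 * (n + 1)),
      (∑ τ : Equiv.Perm (Fin (2 * n + 1)),
        if (Equiv.Perm.decomposeFin.symm (p, τ)) ⟨0, by omega⟩ = i then
          pprodn (n + 1) A (Equiv.Perm.decomposeFin.symm (p, τ)) else 0)
      = if p = i then (∑ τ : Equiv.Perm (Fin (2 * n + 1)),
          pprodn (n + 1) A (Equiv.Perm.decomposeFin.symm (p, τ))) else 0 := by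
    intro p
    by_cases hp : p = i
    · rw [if_pos hp]
      apply Finset.sum_congr rfl
      intro τ _
      rw [hz0 p τ, if_pos hp]
    · rw [if_neg hp]
      apply Finset.sum_eq_zero
      intro τ _
      rw [hz0 p τ, if_neg hp]
  refine Eq.trans (Finset.sum_congr rfl (fun p _ => step1 p)) ?_
  rw [Finset.sum_ite_eq' Finset.univ i
    (fun p => ∑ τ : Equiv.Perm (Fin (2 * n + 1)),
        pprodn (n + 1) A (Equiv.Perm.decomposeFin.symm (p, τ)))]
  rw [if_pos (Finset.mem_univ i)]
  -- now peel τ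
  have e2 : (∑ x : Fin (2 * n + 1) × Equiv.Perm (Fin (2 * n)),
      (fun τ : Equiv.Perm (Fin (2 * n + 1)) =>
        pprodn (n + 1) A (Equiv.Perm.decomposeFin.symm (i, τ)))
        (Equiv.Perm.decomposeFin.symm x))
      = ∑ τ : Equiv.Perm (Fin (2 * n + 1)),
        (fun τ : Equiv.Perm (Fin (2 * n + 1)) =>
          pprodn (n + 1) A (Equiv.Perm.decomposeFin.symm (i, τ))) τ :=
    Fintype.sum_equiv Equiv.Perm.decomposeFin.symm _ _ (fun x => rfl)
  refine Eq.trans e2.symm ?_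
  rw [Fintype.sum_prod_type]
  apply Finset.sum_congr rfl
  intro w _
  -- inner: evaluate pprodn for σ = D.symm (i, D.symm (w, ρ))
  have Acong : ∀ (x y X Y : Fin (2 * (n + 1))), x = X → y = Y → A x y = A X Y := by
    rintro x y X Y rfl rfl; rfl
  have inner : ∀ ρ : Equiv.Perm (Fin (2 * n)),
      pprodn (n + 1) A (Equiv.Perm.decomposeFin.symm (i, Equiv.Perm.decomposeFin.symm (w, ρ)))
        = A i (Equiv.swap 0 i w.succ) *
          pprodn n (A.submatrix
            (fun x : Fin (2 * n) => Equiv.swap 0 i (Fin.succ (Equiv.swap 0 w x.succ)))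
            (fun x : Fin (2 * n) => Equiv.swap 0 i (Fin.succ (Equiv.swap 0 w x.succ)))) ρ := by
    intro ρ
    unfold pprodn
    rw [Fin.prod_univ_succ]
    congr 1
    · -- first factor
      have e0 : (Equiv.Perm.decomposeFin.symm
            (i, Equiv.Perm.decomposeFin.symm (w, ρ))) 0 = i :=
        Equiv.Perm.decomposeFin_symm_apply_zero i _
      have e1 : (Equiv.Perm.decomposeFin.symm
            (i, Equiv.Perm.decomposeFin.symm (w, ρ))) 1
          = Equiv.swap 0 i ((Equiv.Perm.decomposeFin.symm (w, ρ)) 0).succ :=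
        Equiv.Perm.decomposeFin_symm_apply_one _ i
      have e2 : (Equiv.Perm.decomposeFin.symm (w, ρ)) 0 = w :=
        Equiv.Perm.decomposeFin_symm_apply_zero w ρ
      exact Acong _ _ _ _ e0 (e1.trans (by rw [e2]))
    · -- remaining factors
      apply Finset.prod_congr rfl
      intro k _
      have hk2 := k.2
      have f1 := Equiv.Perm.decomposeFin_symm_apply_succ
        (Equiv.Perm.decomposeFin.symm (w, ρ)) i (⟨2 * k.1 + 1, by omega⟩ : Fin (2 * n + 1))
      have f2 := Equiv.Perm.decomposeFin_symm_apply_succ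
        (Equiv.Perm.decomposeFin.symm (w, ρ)) i (⟨2 * k.1 + 1 + 1, by omega⟩ : Fin (2 * n + 1))
      have g1 : (Equiv.Perm.decomposeFin.symm (w, ρ)) (⟨2 * k.1 + 1, by omega⟩ : Fin (2 * n + 1))
          = Equiv.swap 0 w (ρ ⟨2 * k.1, by omega⟩).succ :=
        Equiv.Perm.decomposeFin_symm_apply_succ ρ w ⟨2 * k.1, by omega⟩
      have g2 : (Equiv.Perm.decomposeFin.symm (w, ρ))
            (⟨2 * k.1 + 1 + 1, by omega⟩ : Fin (2 * n + 1))
          = Equiv.swap 0 w (ρ ⟨2 * k.1 + 1, by omega⟩).succ :=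
        Equiv.Perm.decomposeFin_symm_apply_succ ρ w ⟨2 * k.1 + 1, by omega⟩
      exact Acong _ _ _ _ (f1.trans (by rw [g1])) (f2.trans (by rw [g2]))
  refine Eq.trans (Finset.sum_congr rfl (fun ρ _ => inner ρ)) ?_
  rw [← Finset.mul_sum, ← sHaf_eq_pprodn]

lemma swap_zero_ne (m : ℕ) (i : Fin (m + 1)) (x : Fin (m + 1)) (hx : x ≠ 0) :
    Equiv.swap 0 i x ≠ i := by
  intro h
  rw [← Equiv.swap_apply_left 0 i] at h
  exact hx (Equiv.swap 0 i |>.injective h)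

lemma ident (n : ℕ) (A : Matrix (Fin (2 * (n + 1))) (Fin (2 * (n + 1))) ℝ)
    (i : Fin (2 * (n + 1))) (w : Fin (2 * n + 1)) :
    sHaf (A.submatrix
        (fun x : Fin (2 * n) => Equiv.swap 0 i (Fin.succ (Equiv.swap 0 w x.succ)))
        (fun x : Fin (2 * n) => Equiv.swap 0 i (Fin.succ (Equiv.swap 0 w x.succ))))
      = sHaf (del2 A i (Equiv.swap 0 i w.succ)) := by
  classical
  set j : Fin (2 * (n + 1)) := Equiv.swap 0 i w.succ with hj
  have hne : i ≠ j := by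
    intro h
    exact swap_zero_ne _ i w.succ (Fin.succ_ne_zero w) h.symm
  have hcard : ({i, j}ᶜ : Finset (Fin (2 * (n + 1)))).card = 2 * (n + 1) - 2 := by
    rw [Finset.card_compl, Finset.card_insert_of_notMem (by simpa using hne),
      Finset.card_singleton, Fintype.card_fin]
  set G : Fin (2 * n) → Fin (2 * (n + 1)) :=
    fun x => Equiv.swap 0 i (Fin.succ (Equiv.swap 0 w x.succ)) with hG
  have hGinj : Function.Injective G := by
    intro x y hxy
    have h1 := (Equiv.swap 0 i).injective hxy
    have h2 := Fin.succ_injective _ h1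
    have h3 := (Equiv.swap 0 w).injective h2
    exact Fin.succ_injective _ h3
  have hGne : ∀ x, G x ≠ i ∧ G x ≠ j := by
    intro x
    constructor
    · exact swap_zero_ne _ i _ (Fin.succ_ne_zero _)
    · intro h
      rw [hG, hj] at h
      have h1 := (Equiv.swap 0 i).injective h
      have h2 := Fin.succ_injective _ h1
      rw [← Equiv.swap_apply_left 0 w] at h2
      have h3 := (Equiv.swap 0 w).injective h2
      exact Fin.succ_ne_zero _ h3
  have him : Finset.image G Finset.univ = ({i, j}ᶜ : Finset (Fin (2 * (n + 1)))) := by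
    apply Finset.eq_of_subset_of_card_le
    · intro y hy
      rw [Finset.mem_image] at hy
      obtain ⟨x, _, rfl⟩ := hy
      rw [Finset.mem_compl]
      simp only [Finset.mem_insert, Finset.mem_singleton]
      push_neg
      exact hGne x
    · rw [hcard, Finset.card_image_of_injective _ hGinj, Finset.card_univ, Fintype.card_fin]
      omega
  have hrange : Finset.image (({i, j}ᶜ : Finset (Fin (2 * (n + 1)))).orderEmbOfFin hcard)
      Finset.univ = ({i, j}ᶜ : Finset (Fin (2 * (n + 1)))) := by
    apply Finset.coe_injective
    rw [Finset.coe_image, Finset.coe_univ, Set.image_univ, Finset.range_orderEmbOfFin]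
  have hdel : del2 A i j = A.submatrix
      (({i, j}ᶜ : Finset (Fin (2 * (n + 1)))).orderEmbOfFin hcard)
      (({i, j}ᶜ : Finset (Fin (2 * (n + 1)))).orderEmbOfFin hcard) := by
    rw [del2, dif_pos hne]
    rfl
  rw [hdel]
  exact sHaf_eq_of_image_eq A G _ hGinj
    (({i, j}ᶜ : Finset (Fin (2 * (n + 1)))).orderEmbOfFin hcard).injective
    (him.trans hrange.symm)

lemma expansion (n : ℕ) (A : Matrix (Fin (2 * (n + 1))) (Fin (2 * (n + 1))) ℝ)
    (hA : A.IsSymm) (i : Fin (2 * (n + 1))) (hAii : A i i = 0) :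
    sHaf A = (2 * (n + 1) : ℝ) *
      ∑ j : Fin (2 * (n + 1)), A i j * sHaf (del2 A i j) := by
  classical
  have h1 := sHaf_eq_pprodn (n + 1) A
  have h2 := sum_pprodn_fiber (n + 1) (by omega) A hA i
  have h3 := peel n A i
  rw [h1, h2, h3]
  congr 1
  · push_cast; ring
  -- now reindex w ↦ swap 0 i w.succ
  have hstep : ∀ w : Fin (2 * n + 1),
      A i (Equiv.swap 0 i w.succ) *
          sHaf (A.submatrix
            (fun x : Fin (2 * n) => Equiv.swap 0 i (Fin.succ (Equiv.swap 0 w x.succ)))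
            (fun x : Fin (2 * n) => Equiv.swap 0 i (Fin.succ (Equiv.swap 0 w x.succ))))
        = A i (Equiv.swap 0 i w.succ) * sHaf (del2 A i (Equiv.swap 0 i w.succ)) := by
    intro w
    rw [ident n A i w]
  rw [Finset.sum_congr rfl (fun w _ => hstep w)]
  -- sum over image
  set J : Fin (2 * n + 1) → Fin (2 * (n + 1)) := fun w => Equiv.swap 0 i w.succ with hJ
  have hJinj : Function.Injective J := by
    intro x y hxy
    exact Fin.succ_injective _ ((Equiv.swap 0 i).injective hxy)
  have hJim : Finset.image J Finset.univ = ({i} : Finset (Fin (2 * (n + 1))))ᶜ := by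
    apply Finset.eq_of_subset_of_card_le
    · intro y hy
      rw [Finset.mem_image] at hy
      obtain ⟨x, _, rfl⟩ := hy
      rw [Finset.mem_compl, Finset.mem_singleton]
      exact swap_zero_ne _ i x.succ (Fin.succ_ne_zero x)
    · rw [Finset.card_compl, Finset.card_singleton, Fintype.card_fin,
        Finset.card_image_of_injective _ hJinj, Finset.card_univ, Fintype.card_fin]
      omega
  have h4 : ∑ w : Fin (2 * n + 1), A i (J w) * sHaf (del2 A i (J w))
      = ∑ j ∈ ({i} : Finset (Fin (2 * (n + 1))))ᶜ, A i j * sHaf (del2 A i j) := by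
    rw [← hJim, Finset.sum_image (fun x _ y _ h => hJinj h)]
  rw [h4]
  have h5 := Finset.sum_compl_add_sum ({i} : Finset (Fin (2 * (n + 1))))
    (fun j => A i j * sHaf (del2 A i j))
  rw [Finset.sum_singleton, hAii, zero_mul, add_zero] at h5
  rw [h5]

lemma hafn_eq_sHaf {m : ℕ} (A : Matrix (Fin m) (Fin m) ℝ) :
    hafn A = sHaf A / ((m / 2).factorial * 2 ^ (m / 2)) := rfl

lemma hafn_nonneg {m : ℕ} (A : Matrix (Fin m) (Fin m) ℝ) (h : ∀ i j, 0 ≤ A i j) :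
    0 ≤ hafn A := by
  rw [hafn_eq_sHaf]
  apply div_nonneg (sHaf_nonneg A h)
  positivity

lemma del2_nonneg {m : ℕ} (A : Matrix (Fin m) (Fin m) ℝ) (h : ∀ i j, 0 ≤ A i j)
    (i j : Fin m) : ∀ x y, 0 ≤ del2 A i j x y := by
  intro x y
  rw [del2]
  split_ifs with hne
  · exact h _ _
  · simp

lemma hafn_expansion (n : ℕ) (A : Matrix (Fin (2 * (n + 1))) (Fin (2 * (n + 1))) ℝ)
    (hA : A.IsSymm) (i : Fin (2 * (n + 1))) (hAii : A i i = 0) :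
    hafn A = ∑ j : Fin (2 * (n + 1)), A i j * hafn (del2 A i j) := by
  have hm : 2 * (n + 1) / 2 = n + 1 := by omega
  have hm2 : (2 * (n + 1) - 2) / 2 = n := by omega
  have hc1 : hafn A = sHaf A / ((n + 1).factorial * 2 ^ (n + 1)) := by
    rw [hafn_eq_sHaf, hm]
  have hc2 : ∀ j, hafn (del2 A i j) = sHaf (del2 A i j) / (n.factorial * 2 ^ n) := by
    intro j
    rw [hafn_eq_sHaf, hm2]
  rw [hc1, expansion n A hA i hAii]
  simp only [hc2, ← mul_div_assoc]
  rw [← Finset.sum_div]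
  rw [Nat.factorial_succ]
  push_cast
  have h2 : (0:ℝ) < 2 ^ n := by positivity
  have hf : (0:ℝ) < n.factorial := by exact_mod_cast n.factorial_pos
  field_simp
  ring

theorem hafn_pow_le (n : ℕ) (A : Matrix (Fin (2 * n)) (Fin (2 * n)) ℝ)
    (hA : A.IsSymm) (h01 : ∀ i j, A i j = 0 ∨ A i j = 1) (hdiag : ∀ i, A i i = 0)
    (r : Fin (2 * n) → ℝ) (hr : ∀ i, r i = ∑ j, A i j) (i : Fin (2 * n)) :
    hafn A ^ hafn A ≤
      r i ^ hafn A *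
        ∏ j ∈ (Finset.univ.filter fun j => A i j = 1).attach,
          hafn (delTwo A i j.1
              (by
                have h1 : A i j.1 = 1 := (Finset.mem_filter.mp j.2).2
                intro he
                rw [← he, hdiag i] at h1
                norm_num at h1)) ^
            hafn (delTwo A i j.1
              (by
                have h1 : A i j.1 = 1 := (Finset.mem_filter.mp j.2).2
                intro he
                rw [← he, hdiag i] at h1
                norm_num at h1)) := by
  
  rcases n with _ | n
  · exact absurd i.2 (by omega)
  -- n = n + 1
  have hAnn : ∀ x y, 0 ≤ A x y := by
    intro x y
    rcases h01 x y with h | h <;> rw [h] <;> norm_num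
  set s : Finset (Fin (2 * (n + 1))) := Finset.univ.filter (fun j => A i j = 1) with hs
  set t : Fin (2 * (n + 1)) → ℝ := fun j => hafn (del2 A i j) with ht
  have htn : ∀ j ∈ s, 0 ≤ t j := fun j _ =>
    hafn_nonneg _ (fun x y => del2_nonneg A hAnn i j x y)
  -- hafn A = ∑ j ∈ s, t j
  have hsum : hafn A = ∑ j ∈ s, t j := by
    rw [hafn_expansion n A hA i (hdiag i)]
    rw [← Finset.sum_filter_add_sum_filter_not Finset.univ (fun j => A i j = 1)
      (fun j => A i j * t j)]
    have hz : ∑ j ∈ Finset.univ.filter (fun j => ¬ A i j = 1), A i j * t j = 0 := by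
      apply Finset.sum_eq_zero
      intro j hj
      rw [Finset.mem_filter] at hj
      rcases h01 i j with h | h
      · rw [h, zero_mul]
      · exact absurd h hj.2
    rw [hz, add_zero]
    apply Finset.sum_congr rfl
    intro j hj
    rw [Finset.mem_filter] at hj
    rw [hj.2, one_mul]
  -- r i = card s
  have hri : r i = (s.card : ℝ) := by
    rw [hr i]
    rw [← Finset.sum_filter_add_sum_filter_not Finset.univ (fun j => A i j = 1)
      (fun j => A i j)]
    have hz : ∑ j ∈ Finset.univ.filter (fun j => ¬ A i j = 1), A i j = 0 := by
      apply Finset.sum_eq_zero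
      intro j hj
      rw [Finset.mem_filter] at hj
      rcases h01 i j with h | h
      · exact h
      · exact absurd h hj.2
    rw [hz, add_zero]
    rw [Finset.sum_congr rfl (fun j hj => (Finset.mem_filter.mp hj).2)]
    rw [Finset.sum_const, nsmul_eq_mul, mul_one]
  -- the product in the goal equals ∏ j ∈ s, t j ^ t j
  have hprod : (∏ j ∈ s.attach,
      hafn (delTwo A i j.1
          (by
            have h1 : A i j.1 = 1 := (Finset.mem_filter.mp j.2).2
            intro he
            rw [← he, hdiag i] at h1
            norm_num at h1)) ^
        hafn (delTwo A i j.1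
          (by
            have h1 : A i j.1 = 1 := (Finset.mem_filter.mp j.2).2
            intro he
            rw [← he, hdiag i] at h1
            norm_num at h1)))
      = ∏ j ∈ s, t j ^ t j := by
    rw [← Finset.prod_attach s (fun j => t j ^ t j)]
    apply Finset.prod_congr rfl
    intro j _
    have hne : i ≠ j.1 := by
      have h1 : A i j.1 = 1 := (Finset.mem_filter.mp j.2).2
      intro he
      rw [← he, hdiag i] at h1
      norm_num at h1
    have : del2 A i j.1 = delTwo A i j.1 hne := by
      rw [del2, dif_pos hne]
    rw [ht]
    simp only [this]
  rw [hprod, hsum, hri]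
  exact amgm_aux s t htn
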